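/- Let X be a set, H₀ and H real Hilbert spaces, Φ : X → H₀ a bounded map, U ⊆ H, and for each M ≥ 1 let f_M : X^M × U → X^M and ℓ_M : X^M × U → ℝ. Let S' ⊆ H₀ contain all empirical embeddings Π̂(x) for all M and x ∈ X^M, let F : S' × U → S' satisfy ‖F(s,u) − F(s',u)‖ ≤ L_f‖s − s'‖ for all s,s' ∈ S', u ∈ U, and let Λ : S' × U → ℝ satisfy |Λ(s,u) − Λ(s',u)| ≤ L_ℓ‖s − s'‖ for all s,s' ∈ S', u ∈ U. Assume lim_{M→∞} sup_{x ∈ X^M, u ∈ U} ‖Π̂(f_M(x,u)) − F(Π̂(x),u)‖ = 0 and lim_{M→∞} sup_{x ∈ X^M, u ∈ U} |ℓ_M(x,u) − Λ(Π̂(x),u)| = 0. For x₀ ∈ X^M and u(0),…,u(N−1) ∈ U define x(0)=x₀, x(n+1)=f_M(x(n),u(n)), ν(0)=Π̂(x₀), ν(n+1)=F(ν(n),u(n)), and set J_N^{[M]}(x₀,u) = ∑_{n=0}^{N−1} ℓ_M(x(n),u(n)) and J_N(Π̂(x₀),u) = ∑_{n=0}^{N−1} Λ(ν(n),u(n)).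 Then for every N ≥ 1, lim_{M→∞} sup_{x₀ ∈ X^M, u ∈ U^N} |J_N^{[M]}(x₀,u) − J_N(Π̂(x₀),u)| = 0. -/

import Mathlib

open Finset

/-- The empirical embedding `Π̂(x) = (1/M) ∑ m, Φ (x m)` of a tuple `x ∈ X^M`. -/
noncomputable def empEmbed {X H₀ : Type*} [AddCommMonoid H₀] [Module ℝ H₀]
    (Φ : X → H₀) {M : ℕ} (x : Fin M → X) : H₀ :=
  (M : ℝ)⁻¹ • ∑ m : Fin M, Φ (x m)

/-- Mean field limit of the total cost functional: if the transition maps `f_M` and stage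
costs `ℓ_M` converge uniformly (over states and inputs) to the embedded mean field
transition map `F` and stage cost `Λ`, both Lipschitz in the state on a set `S'`
containing all empirical embeddings, then for every horizon `N ≥ 1` the total costs
`J_N^{[M]}(x₀,u) = ∑_{n<N} ℓ_M(x(n),u(n))` converge uniformly to
`J_N(Π̂(x₀),u) = ∑_{n<N} Λ(ν(n),u(n))`, where `x(n+1) = f_M(x(n),u(n))`,
`ν(0) = Π̂(x₀)` and `ν(n+1) = F(ν(n),u(n))`. -/
theorem mfl_total_cost
    {X : Type*}
    {H₀ : Type*} [NormedAddCommGroup H₀] [InnerProductSpace ℝ H₀] [CompleteSpace H₀]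
    {H : Type*} [NormedAddCommGroup H] [InnerProductSpace ℝ H] [CompleteSpace H]
    (Φ : X → H₀) (hΦbdd : ∃ C : ℝ, ∀ x : X, ‖Φ x‖ ≤ C)
    (U : Set H)
    (f : (M : ℕ) → (Fin M → X) → H → (Fin M → X))
    (ℓ : (M : ℕ) → (Fin M → X) → H → ℝ)
    (S' : Set H₀) (hS' : ∀ M : ℕ, 1 ≤ M → ∀ x : Fin M → X, empEmbed Φ x ∈ S')
    (F : H₀ → H → H₀) (hFS : ∀ s ∈ S', ∀ u ∈ U, F s u ∈ S')
    (Λ : H₀ → H → ℝ)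
    (Lf : ℝ) (hLf : 0 ≤ Lf)
    (hFlip : ∀ s ∈ S', ∀ s' ∈ S', ∀ u ∈ U, ‖F s u - F s' u‖ ≤ Lf * ‖s - s'‖)
    (Lℓ : ℝ) (hLℓ : 0 ≤ Lℓ)
    (hΛlip : ∀ s ∈ S', ∀ s' ∈ S', ∀ u ∈ U, |Λ s u - Λ s' u| ≤ Lℓ * ‖s - s'‖)
    -- uniform convergence of the embedded transition maps
    (hconvF : ∀ ε : ℝ, 0 < ε → ∃ M₀ : ℕ, ∀ M : ℕ, M₀ ≤ M → 1 ≤ M →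
      ∀ x : Fin M → X, ∀ u ∈ U, ‖empEmbed Φ (f M x u) - F (empEmbed Φ x) u‖ ≤ ε)
    -- uniform convergence of the stage costs
    (hconvℓ : ∀ ε : ℝ, 0 < ε → ∃ M₀ : ℕ, ∀ M : ℕ, M₀ ≤ M → 1 ≤ M →
      ∀ x : Fin M → X, ∀ u ∈ U, |ℓ M x u - Λ (empEmbed Φ x) u| ≤ ε) :
    ∀ N : ℕ, 1 ≤ N → ∀ ε : ℝ, 0 < ε → ∃ M₀ : ℕ, ∀ M : ℕ, M₀ ≤ M → 1 ≤ M →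
      ∀ (u : ℕ → H), (∀ n < N, u n ∈ U) →
      ∀ (x : ℕ → Fin M → X), (∀ n < N, x (n + 1) = f M (x n) (u n)) →
      ∀ (ν : ℕ → H₀), ν 0 = empEmbed Φ (x 0) → (∀ n < N, ν (n + 1) = F (ν n) (u n)) →
        |(∑ n ∈ Finset.range N, ℓ M (x n) (u n)) -
          (∑ n ∈ Finset.range N, Λ (ν n) (u n))| ≤ ε := by
  intro N hN ε hε
  set S : ℝ := ∑ k ∈ Finset.range N, Lf ^ k with hSdef
  have hS0 : 0 ≤ S := Finset.sum_nonneg fun k _ => pow_nonneg hLf k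
  have hD : (0:ℝ) < Lℓ * S + 1 := by positivity
  have hNpos : (0:ℝ) < (N : ℝ) := by exact_mod_cast hN
  set δF : ℝ := ε / (2 * N * (Lℓ * S + 1)) with hδF
  set δℓ : ℝ := ε / (2 * N) with hδℓ
  have hδFpos : 0 < δF := by positivity
  have hδℓpos : 0 < δℓ := by positivity
  obtain ⟨M₁, hM₁⟩ := hconvF δF hδFpos
  obtain ⟨M₂, hM₂⟩ := hconvℓ δℓ hδℓpos
  refine ⟨max M₁ M₂, fun M hM hM1 u hu x hx ν hν0 hν => ?_⟩
  have hνS : ∀ n ≤ N, ν n ∈ S' := by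
    intro n hn
    induction n with
    | zero => rw [hν0]; exact hS' M hM1 _
    | succ k ih =>
      rw [hν k (by omega)]
      exact hFS _ (ih (by omega)) _ (hu k (by omega))
  have herr : ∀ n ≤ N, ‖empEmbed Φ (x n) - ν n‖ ≤ δF * ∑ k ∈ Finset.range n, Lf ^ k := by
    intro n hn
    induction n with
    | zero => simp [hν0]
    | succ k ih =>
      have hk : k < N := by omega
      have h1 : ‖empEmbed Φ (x (k+1)) - F (empEmbed Φ (x k)) (u k)‖ ≤ δF := by
        rw [hx k hk]
        exact hM₁ M (le_trans (le_max_left _ _) hM) hM1 _ _ (hu k hk)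
      have h2 : ‖F (empEmbed Φ (x k)) (u k) - F (ν k) (u k)‖ ≤ Lf * ‖empEmbed Φ (x k) - ν k‖ :=
        hFlip _ (hS' M hM1 _) _ (hνS k (by omega)) _ (hu k hk)
      calc ‖empEmbed Φ (x (k+1)) - ν (k+1)‖
          ≤ ‖empEmbed Φ (x (k+1)) - F (empEmbed Φ (x k)) (u k)‖
            + ‖F (empEmbed Φ (x k)) (u k) - ν (k+1)‖ :=
            norm_sub_le_norm_sub_add_norm_sub _ _ _
        _ ≤ δF + Lf * ‖empEmbed Φ (x k) - ν k‖ := by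
            rw [hν k hk]; exact add_le_add h1 h2
        _ ≤ δF + Lf * (δF * ∑ j ∈ Finset.range k, Lf ^ j) :=
            add_le_add le_rfl (mul_le_mul_of_nonneg_left (ih (by omega)) hLf)
        _ = δF * ∑ j ∈ Finset.range (k+1), Lf ^ j := by
            rw [geom_sum_succ]; ring
  have hstage : ∀ n < N, |ℓ M (x n) (u n) - Λ (ν n) (u n)| ≤ δℓ + Lℓ * (δF * S) := by
    intro n hn
    have h1 : |ℓ M (x n) (u n) - Λ (empEmbed Φ (x n)) (u n)| ≤ δℓ :=
      hM₂ M (le_trans (le_max_right _ _) hM) hM1 _ _ (hu n hn)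
    have h2 : |Λ (empEmbed Φ (x n)) (u n) - Λ (ν n) (u n)|
        ≤ Lℓ * ‖empEmbed Φ (x n) - ν n‖ :=
      hΛlip _ (hS' M hM1 _) _ (hνS n (le_of_lt hn)) _ (hu n hn)
    have hsum : (∑ k ∈ Finset.range n, Lf ^ k) ≤ S := by
      exact Finset.sum_le_sum_of_subset_of_nonneg
        (Finset.range_subset_range.2 (le_of_lt hn))
        (fun k _ _ => pow_nonneg hLf k)
    have h3 : ‖empEmbed Φ (x n) - ν n‖ ≤ δF * S :=
      le_trans (herr n (le_of_lt hn))
        (mul_le_mul_of_nonneg_left hsum (le_of_lt hδFpos))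
    calc |ℓ M (x n) (u n) - Λ (ν n) (u n)|
        ≤ |ℓ M (x n) (u n) - Λ (empEmbed Φ (x n)) (u n)|
          + |Λ (empEmbed Φ (x n)) (u n) - Λ (ν n) (u n)| := by
          have := abs_sub_abs_le_abs_sub (ℓ M (x n) (u n)) (Λ (ν n) (u n))
          calc |ℓ M (x n) (u n) - Λ (ν n) (u n)|
              = |(ℓ M (x n) (u n) - Λ (empEmbed Φ (x n)) (u n))
                + (Λ (empEmbed Φ (x n)) (u n) - Λ (ν n) (u n))| := by ring_nf
            _ ≤ _ := abs_add_le _ _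
      _ ≤ δℓ + Lℓ * ‖empEmbed Φ (x n) - ν n‖ := add_le_add h1 h2
      _ ≤ δℓ + Lℓ * (δF * S) :=
          add_le_add le_rfl (mul_le_mul_of_nonneg_left h3 hLℓ)
  calc |(∑ n ∈ Finset.range N, ℓ M (x n) (u n)) - (∑ n ∈ Finset.range N, Λ (ν n) (u n))|
      = |∑ n ∈ Finset.range N, (ℓ M (x n) (u n) - Λ (ν n) (u n))| := by
        rw [Finset.sum_sub_distrib]
    _ ≤ ∑ n ∈ Finset.range N, |ℓ M (x n) (u n) - Λ (ν n) (u n)| :=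
        Finset.abs_sum_le_sum_abs _ _
    _ ≤ ∑ n ∈ Finset.range N, (δℓ + Lℓ * (δF * S)) :=
        Finset.sum_le_sum fun n hn => hstage n (Finset.mem_range.1 hn)
    _ = (N : ℝ) * (δℓ + Lℓ * (δF * S)) := by
        rw [Finset.sum_const, Finset.card_range, nsmul_eq_mul]
    _ ≤ ε := by
        have h1 : (N : ℝ) * δℓ = ε / 2 := by
          rw [hδℓ]; field_simp
        have h2 : (N : ℝ) * (Lℓ * (δF * S)) ≤ ε / 2 := by
          have key : Lℓ * S ≤ Lℓ * S + 1 := by linarith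
          have heq : (N : ℝ) * (Lℓ * (δF * S)) = (ε / 2) * ((Lℓ * S) / (Lℓ * S + 1)) := by
            rw [hδF]; field_simp
          rw [heq]
          calc (ε / 2) * ((Lℓ * S) / (Lℓ * S + 1)) ≤ (ε / 2) * 1 :=
                mul_le_mul_of_nonneg_left (div_le_one_of_le₀ key hD.le) (by positivity)
            _ = ε / 2 := mul_one _
        nlinarith
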